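/- Let p be an odd prime and let θ be an integer such that 1 + θ² is not a square in ZMod p. Let (a_m)_{m=0,…,p} be the complete set of p+1 MUBs of ℂ^p (the p Fourier–Gauss bases and the standard basis), and let P_p be the control-phase on ℂ^p ⊗ ℂ^p. Then the p²+1 orthonormal bases of EuclideanSpace ℂ (Fin p × Fin p) given by the standard basis { |s⟩ ⊗ |t⟩ } together with the p² bases { P_p^{θν} (a_μ^x ⊗ a_{μ+ν}^y) : x, y ∈ Fin p } for μ, ν ∈ ℤ/pℤ (subscripts mod p) are pairwise mutually unbiased, i.e. form a complete set of MUBs in dimension p². -/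

import Mathlib

/-- `α_p = exp(2πi/p)`, the `p`-th root of unity. -/
noncomputable def rootOfUnity (p : ℕ) : ℂ := Complex.exp (2 * Real.pi * Complex.I / p)

/-- The Fourier–Gauss vector `|j_m⟩` with components `p^{-1/2}·α_p^{js + ms²}`. -/
noncomputable def fourierGauss (p : ℕ) (j m : ℕ) : EuclideanSpace ℂ (Fin p) :=
  WithLp.toLp 2 (fun s : Fin p => (Real.sqrt p : ℂ)⁻¹ * rootOfUnity p ^ (j * (s : ℕ) + m * (s : ℕ) ^ 2))

/-- The product vector `(u ⊗ v)(a,b) = u(a)·v(b)`. -/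
noncomputable def tens {p : ℕ} (u v : EuclideanSpace ℂ (Fin p)) :
    EuclideanSpace ℂ (Fin p × Fin p) :=
  WithLp.toLp 2 (fun ab : Fin p × Fin p => u ab.1 * v ab.2)

/-- The control-phase `P_p`, the diagonal unitary with `P_p(|s⟩⊗|t⟩) = α_p^{st}|s⟩⊗|t⟩`. -/
noncomputable def cphase (p : ℕ) : Matrix (Fin p × Fin p) (Fin p × Fin p) ℂ :=
  Matrix.diagonal fun st : Fin p × Fin p => rootOfUnity p ^ ((st.1 : ℕ) * (st.2 : ℕ))

/-- The vectors `P_p^{θν} (a_μ^x ⊗ a_{μ+ν}^y)` of the generated bases (subscripts mod `p`). -/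
noncomputable def cpVec (p : ℕ) (θ : ℤ) (μ ν : ZMod p) (x y : Fin p) :
    EuclideanSpace ℂ (Fin p × Fin p) :=
  WithLp.toLp 2 ((cphase p ^ (((θ : ZMod p) * ν).val)).mulVec
    (tens (fourierGauss p (x : ℕ) μ.val) (fourierGauss p (y : ℕ) (μ.val + ν.val))))

noncomputable def eps (p : ℕ) (a : ZMod p) : ℂ := rootOfUnity p ^ a.val

lemma rootOfUnity_prim {p : ℕ} [NeZero p] : IsPrimitiveRoot (rootOfUnity p) p :=
  Complex.isPrimitiveRoot_exp p (NeZero.ne p)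

lemma rootOfUnity_pow_self {p : ℕ} [NeZero p] : rootOfUnity p ^ p = 1 :=
  rootOfUnity_prim.pow_eq_one

lemma eps_natCast {p : ℕ} [NeZero p] (n : ℕ) : eps p (n : ZMod p) = rootOfUnity p ^ n := by
  rw [eps, ZMod.val_natCast]
  exact (pow_eq_pow_mod n rootOfUnity_pow_self).symm

lemma natCast_val_self {p : ℕ} [NeZero p] (a : ZMod p) : ((a.val : ℕ) : ZMod p) = a := by
  rw [ZMod.natCast_val, ZMod.cast_id]

lemma eps_add {p : ℕ} [NeZero p] (a b : ZMod p) : eps p (a + b) = eps p a * eps p b := by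
  have h : a + b = ((a.val + b.val : ℕ) : ZMod p) := by
    push_cast [natCast_val_self]
    ring
  rw [h, eps_natCast, pow_add, eps, eps]

lemma eps_zero {p : ℕ} [NeZero p] : eps p 0 = 1 := by
  simp [eps]

lemma abs_rootOfUnity {p : ℕ} : ‖rootOfUnity p‖ = 1 := by
  have h : (2 * (Real.pi : ℂ) * Complex.I / p) = ((2 * Real.pi / p : ℝ) : ℂ) * Complex.I := by
    push_cast; ring
  rw [rootOfUnity, h, Complex.norm_exp_ofReal_mul_I]

lemma abs_eps {p : ℕ} (a : ZMod p) : ‖eps p a‖ = 1 := by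
  rw [eps, norm_pow, abs_rootOfUnity, one_pow]

lemma eps_mul_eps_neg {p : ℕ} [NeZero p] (a : ZMod p) : eps p a * eps p (-a) = 1 := by
  rw [← eps_add]; simp [eps_zero]

lemma star_eps {p : ℕ} [NeZero p] (a : ZMod p) : (starRingEnd ℂ) (eps p a) = eps p (-a) := by
  have h1 : (eps p a)⁻¹ = (starRingEnd ℂ) (eps p a) :=
    Complex.inv_eq_conj (by rw [abs_eps])
  have h2 : eps p (-a) = (eps p a)⁻¹ :=
    eq_inv_of_mul_eq_one_right (eps_mul_eps_neg a)
  rw [h2, h1]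

noncomputable def finZModEquiv (p : ℕ) [NeZero p] : Fin p ≃ ZMod p where
  toFun i := ((i : ℕ) : ZMod p)
  invFun a := ⟨a.val, a.val_lt⟩
  left_inv i := by ext; simp [ZMod.val_natCast, Nat.mod_eq_of_lt i.isLt]
  right_inv a := by simp [natCast_val_self]

lemma sum_eps_all {p : ℕ} [NeZero p] (hp : 1 < p) : ∑ s : ZMod p, eps p s = 0 := by
  have h : ∑ s : ZMod p, eps p s = ∑ i : Fin p, rootOfUnity p ^ (i : ℕ) := by
    refine (Fintype.sum_equiv (finZModEquiv p) _ _ fun i => ?_).symm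
    rw [finZModEquiv]; simp only [Equiv.coe_fn_mk]; rw [eps_natCast]
  rw [h, Fin.sum_univ_eq_sum_range]
  exact rootOfUnity_prim.geom_sum_eq_zero hp

lemma sum_eps {p : ℕ} [NeZero p] (hp : p.Prime) (a : ZMod p) :
    ∑ s : ZMod p, eps p (a * s) = if a = 0 then (p : ℂ) else 0 := by
  haveI := Fact.mk hp
  split_ifs with h
  · subst h
    simp [eps_zero, Finset.card_univ, ZMod.card]
  · have h1 : ∑ s : ZMod p, eps p (a * s) = ∑ s : ZMod p, eps p s :=
      Fintype.sum_bijective _ (mulLeft_bijective₀ a h) _ _ fun s => rfl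
    rw [h1, sum_eps_all hp.one_lt]

lemma gauss2 {p : ℕ} [NeZero p] (hp : p.Prime) (a b c d f : ZMod p)
    (hdet : c * c ≠ 4 * (a * b)) :
    (∑ q : ZMod p × ZMod p, eps p (a*q.1*q.1 + b*q.2*q.2 + c*q.1*q.2 + d*q.1 + f*q.2)) *
      (starRingEnd ℂ) (∑ q : ZMod p × ZMod p,
        eps p (a*q.1*q.1 + b*q.2*q.2 + c*q.1*q.2 + d*q.1 + f*q.2)) = (p : ℂ) ^ 2 := by
  haveI := Fact.mk hp
  set F : ZMod p × ZMod p → ZMod p :=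
    fun q => a*q.1*q.1 + b*q.2*q.2 + c*q.1*q.2 + d*q.1 + f*q.2 with hF
  have hconj : (starRingEnd ℂ) (∑ q : ZMod p × ZMod p, eps p (F q))
      = ∑ q : ZMod p × ZMod p, eps p (-(F q)) := by
    rw [map_sum]; exact Finset.sum_congr rfl fun q _ => star_eps _
  have hsplit : ∀ q' u : ZMod p × ZMod p, eps p (F (q' + u)) * eps p (-(F q')) =
      eps p ((2*a*u.1 + c*u.2) * q'.1) *
        (eps p ((c*u.1 + 2*b*u.2) * q'.2) * eps p (F u)) := by
    intro q' u
    rw [← eps_add, ← eps_add, ← eps_add]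
    congr 1
    simp only [hF, Prod.fst_add, Prod.snd_add]
    ring
  calc (∑ q : ZMod p × ZMod p, eps p (F q)) * (starRingEnd ℂ) (∑ q : ZMod p × ZMod p, eps p (F q))
      = ∑ q : ZMod p × ZMod p, ∑ q' : ZMod p × ZMod p, eps p (F q) * eps p (-(F q')) := by
        rw [hconj, Finset.sum_mul_sum]
    _ = ∑ q' : ZMod p × ZMod p, ∑ q : ZMod p × ZMod p, eps p (F q) * eps p (-(F q')) :=
        Finset.sum_comm
    _ = ∑ q' : ZMod p × ZMod p, ∑ u : ZMod p × ZMod p, eps p (F (q' + u)) * eps p (-(F q')) := by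
        refine Finset.sum_congr rfl fun q' _ => ?_
        exact (Fintype.sum_equiv (Equiv.addLeft q') _ _ fun u => rfl).symm
    _ = ∑ q' : ZMod p × ZMod p, ∑ u : ZMod p × ZMod p,
          eps p ((2*a*u.1 + c*u.2) * q'.1) *
            (eps p ((c*u.1 + 2*b*u.2) * q'.2) * eps p (F u)) := by
        refine Finset.sum_congr rfl fun q' _ => Finset.sum_congr rfl fun u _ => hsplit q' u
    _ = ∑ u : ZMod p × ZMod p, ∑ q' : ZMod p × ZMod p,
          eps p ((2*a*u.1 + c*u.2) * q'.1) *
            (eps p ((c*u.1 + 2*b*u.2) * q'.2) * eps p (F u)) :=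
        Finset.sum_comm
    _ = ∑ u : ZMod p × ZMod p,
          (∑ s' : ZMod p, eps p ((2*a*u.1 + c*u.2) * s')) *
            ((∑ t' : ZMod p, eps p ((c*u.1 + 2*b*u.2) * t')) * eps p (F u)) := by
        refine Finset.sum_congr rfl fun u _ => ?_
        rw [Fintype.sum_prod_type]
        simp only [Finset.sum_mul, Finset.mul_sum, mul_assoc]
        exact Finset.sum_comm
    _ = ∑ u : ZMod p × ZMod p,
          (if 2*a*u.1 + c*u.2 = 0 then (p : ℂ) else 0) *
            ((if c*u.1 + 2*b*u.2 = 0 then (p : ℂ) else 0) * eps p (F u)) := by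
        refine Finset.sum_congr rfl fun u _ => ?_
        rw [sum_eps hp, sum_eps hp]
    _ = (if 2*a*(0:ZMod p) + c*(0:ZMod p) = 0 then (p : ℂ) else 0) *
            ((if c*(0:ZMod p) + 2*b*(0:ZMod p) = 0 then (p : ℂ) else 0) *
              eps p (F (0, 0))) := by
        refine Fintype.sum_eq_single (0 : ZMod p × ZMod p) fun u hu => ?_
        by_cases hX : 2*a*u.1 + c*u.2 = 0
        · by_cases hY : c*u.1 + 2*b*u.2 = 0
          · exfalso
            have h4 : 4*(a*b) - c*c ≠ 0 := sub_ne_zero_of_ne (Ne.symm hdet)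
            have hu1 : (4*(a*b) - c*c) * u.1
                = 2*b*(2*a*u.1 + c*u.2) - c*(c*u.1 + 2*b*u.2) := by ring
            have hu2 : (4*(a*b) - c*c) * u.2
                = 2*a*(c*u.1 + 2*b*u.2) - c*(2*a*u.1 + c*u.2) := by ring
            rw [hX, hY] at hu1 hu2
            simp only [mul_zero, sub_zero, zero_sub, neg_zero] at hu1 hu2
            have h1 : u.1 = 0 := by
              rcases mul_eq_zero.mp hu1 with h | h
              · exact absurd h h4
              · exact h
            have h2 : u.2 = 0 := by
              rcases mul_eq_zero.mp hu2 with h | h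
              · exact absurd h h4
              · exact h
            exact hu (Prod.ext h1 h2)
          · simp [hY]
        · simp [hX]
    _ = (p : ℂ) ^ 2 := by
        have hF0 : F (0, 0) = 0 := by simp [hF]
        rw [hF0]
        simp [eps_zero]
        ring

lemma sqrt_inv_mul_sqrt_inv (p : ℕ) :
    ((Real.sqrt p : ℂ))⁻¹ * ((Real.sqrt p : ℂ))⁻¹ = (p : ℂ)⁻¹ := by
  rw [← mul_inv, ← Complex.ofReal_mul, Real.mul_self_sqrt (by positivity)]
  norm_num

lemma cpVec_apply {p : ℕ} [NeZero p] (θ : ℤ) (μ ν : ZMod p) (x y : Fin p)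
    (st : Fin p × Fin p) :
    cpVec p θ μ ν x y st = (p : ℂ)⁻¹ *
      eps p ((θ : ZMod p) * ν * ((st.1 : ℕ) : ZMod p) * ((st.2 : ℕ) : ZMod p)
        + ((x : ℕ) : ZMod p) * ((st.1 : ℕ) : ZMod p)
        + μ * ((st.1 : ℕ) : ZMod p) * ((st.1 : ℕ) : ZMod p)
        + ((y : ℕ) : ZMod p) * ((st.2 : ℕ) : ZMod p)
        + (μ + ν) * ((st.2 : ℕ) : ZMod p) * ((st.2 : ℕ) : ZMod p)) := by
  unfold cpVec cphase tens fourierGauss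
  simp only [WithLp.ofLp_toLp]
  rw [Matrix.diagonal_pow, Matrix.mulVec_diagonal]
  simp only [Pi.pow_apply]
  rw [← pow_mul]
  have hre : rootOfUnity p ^ ((st.1 : ℕ) * (st.2 : ℕ) * ((θ : ZMod p) * ν).val) *
      ((Real.sqrt p : ℂ)⁻¹ * rootOfUnity p ^ ((x : ℕ) * (st.1 : ℕ) + μ.val * (st.1 : ℕ) ^ 2) *
        ((Real.sqrt p : ℂ)⁻¹ *
          rootOfUnity p ^ ((y : ℕ) * (st.2 : ℕ) + (μ.val + ν.val) * (st.2 : ℕ) ^ 2)))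
      = ((Real.sqrt p : ℂ)⁻¹ * (Real.sqrt p : ℂ)⁻¹) *
        rootOfUnity p ^ ((st.1 : ℕ) * (st.2 : ℕ) * ((θ : ZMod p) * ν).val
          + ((x : ℕ) * (st.1 : ℕ) + μ.val * (st.1 : ℕ) ^ 2)
          + ((y : ℕ) * (st.2 : ℕ) + (μ.val + ν.val) * (st.2 : ℕ) ^ 2)) := by
    ring
  rw [hre, sqrt_inv_mul_sqrt_inv, ← eps_natCast]
  congr 1
  push_cast [ZMod.natCast_val, ZMod.cast_id]
  ring

/-- If `1 + θ²` is not a square mod the odd prime `p`, then the standard basis of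
`ℂ^p ⊗ ℂ^p` together with the `p²` bases `{P_p^{θν}(a_μ^x ⊗ a_{μ+ν}^y)}` (`μ, ν ∈ ℤ/pℤ`)
are pairwise mutually unbiased: a complete set of `p²+1` MUBs in dimension `p²`. -/
theorem cphase_complete_mub (p : ℕ) (hp : p.Prime) (hodd : Odd p) (θ : ℤ)
    (hθ : ¬ ∃ x : ZMod p, x ^ 2 = 1 + (θ : ZMod p) ^ 2) :
    (∀ μ ν μ' ν' : ZMod p, (μ, ν) ≠ (μ', ν') →
      ∀ x y x' y' : Fin p,
        ‖(inner ℂ (cpVec p θ μ ν x y) (cpVec p θ μ' ν' x' y') : ℂ)‖ ^ 2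
          = 1 / ((p : ℝ) ^ 2)) ∧
    (∀ (μ ν : ZMod p) (x y : Fin p) (st : Fin p × Fin p),
      ‖(inner ℂ (EuclideanSpace.single st (1 : ℂ)) (cpVec p θ μ ν x y) : ℂ)‖ ^ 2
        = 1 / ((p : ℝ) ^ 2)) := by
  haveI : NeZero p := ⟨hp.pos.ne'⟩
  haveI := Fact.mk hp
  have hp0 : (p : ℂ) ≠ 0 := by exact_mod_cast hp.pos.ne'
  have h2ne : (2 : ZMod p) ≠ 0 := by
    intro h
    have h2 : ((2 : ℕ) : ZMod p) = 0 := by exact_mod_cast h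
    have hdvd : p ∣ 2 := (ZMod.natCast_eq_zero_iff 2 p).mp h2
    have hp2 : p = 2 := (Nat.prime_dvd_prime_iff_eq hp Nat.prime_two).mp hdvd
    rw [hp2] at hodd
    exact (by decide : ¬ Odd 2) hodd
  constructor
  · intro μ ν μ' ν' hne x y x' y'
    set A : ZMod p := μ' - μ with hA
    set B : ZMod p := (μ' + ν') - (μ + ν) with hB
    set C : ZMod p := (θ : ZMod p) * (ν' - ν) with hC
    set D : ZMod p := ((x' : ℕ) : ZMod p) - ((x : ℕ) : ZMod p) with hD
    set E : ZMod p := ((y' : ℕ) : ZMod p) - ((y : ℕ) : ZMod p) with hE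
    have hdet : C * C ≠ 4 * (A * B) := by
      intro hcc
      by_cases hν : ν' - ν = 0
      · have hμ : A ≠ 0 := by
          intro h
          exact hne (Prod.ext (sub_eq_zero.mp h).symm (sub_eq_zero.mp hν).symm)
        have h4 : (4 : ZMod p) ≠ 0 := by
          have := mul_ne_zero h2ne h2ne
          simpa [show (4 : ZMod p) = 2 * 2 by norm_num] using this
        have hBA : B = A + (ν' - ν) := by rw [hA, hB]; ring
        rw [hC, hν, hBA, hν] at hcc
        simp only [mul_zero, zero_mul, add_zero] at hcc
        have : (4 : ZMod p) * (A * A) = 0 := hcc.symm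
        rcases mul_eq_zero.mp this with h | h
        · exact h4 h
        · rcases mul_eq_zero.mp h with h' | h' <;> exact hμ h'
      · apply hθ
        refine ⟨(2 * (μ' - μ) + (ν' - ν)) * (ν' - ν)⁻¹, ?_⟩
        have key : (2 * (μ' - μ) + (ν' - ν)) ^ 2
            = (1 + (θ : ZMod p) ^ 2) * (ν' - ν) ^ 2 := by
          rw [hC, hA, hB] at hcc
          linear_combination -hcc
        have hinv : (ν' - ν) * (ν' - ν)⁻¹ = 1 := mul_inv_cancel₀ hν
        calc ((2 * (μ' - μ) + (ν' - ν)) * (ν' - ν)⁻¹) ^ 2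
            = (2 * (μ' - μ) + (ν' - ν)) ^ 2 * ((ν' - ν)⁻¹) ^ 2 := by ring
          _ = (1 + (θ : ZMod p) ^ 2) * ((ν' - ν) * (ν' - ν)⁻¹) ^ 2 := by rw [key]; ring
          _ = 1 + (θ : ZMod p) ^ 2 := by rw [hinv]; ring
    set S : ℂ := ∑ q : ZMod p × ZMod p,
        eps p (A*q.1*q.1 + B*q.2*q.2 + C*q.1*q.2 + D*q.1 + E*q.2) with hS
    have hinner : (inner ℂ (cpVec p θ μ ν x y) (cpVec p θ μ' ν' x' y') : ℂ)
        = (p : ℂ)⁻¹ * (p : ℂ)⁻¹ * S := by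
      rw [PiLp.inner_apply]
      have key : ∀ st : Fin p × Fin p,
          (inner ℂ (cpVec p θ μ ν x y st) (cpVec p θ μ' ν' x' y' st) : ℂ)
          = (p : ℂ)⁻¹ * (p : ℂ)⁻¹ *
            eps p (A * ((st.1 : ℕ) : ZMod p) * ((st.1 : ℕ) : ZMod p)
              + B * ((st.2 : ℕ) : ZMod p) * ((st.2 : ℕ) : ZMod p)
              + C * ((st.1 : ℕ) : ZMod p) * ((st.2 : ℕ) : ZMod p)
              + D * ((st.1 : ℕ) : ZMod p)
              + E * ((st.2 : ℕ) : ZMod p)) := by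
        intro st
        rw [RCLike.inner_apply, cpVec_apply, cpVec_apply, map_mul, star_eps]
        rw [show (starRingEnd ℂ) ((p : ℂ)⁻¹) = (p : ℂ)⁻¹ by simp]
        rw [mul_mul_mul_comm, ← eps_add]
        congr 1
        rw [hA, hB, hC, hD, hE]
        ring
      rw [Finset.sum_congr rfl fun st _ => key st, ← Finset.mul_sum, hS]
      congr 1
      exact Fintype.sum_equiv ((finZModEquiv p).prodCongr (finZModEquiv p)) _ _ fun st => rfl
    have hSS : S * (starRingEnd ℂ) S = (p : ℂ) ^ 2 := by
      rw [hS]; exact gauss2 hp A B C D E hdet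
    have habs2 : (inner ℂ (cpVec p θ μ ν x y) (cpVec p θ μ' ν' x' y') : ℂ) *
        (starRingEnd ℂ) (inner ℂ (cpVec p θ μ ν x y) (cpVec p θ μ' ν' x' y') : ℂ)
        = ((p : ℂ) ^ 2)⁻¹ := by
      rw [hinner]
      rw [show (starRingEnd ℂ) ((p:ℂ)⁻¹ * (p:ℂ)⁻¹ * S)
          = (p:ℂ)⁻¹ * (p:ℂ)⁻¹ * (starRingEnd ℂ) S from by simp [map_mul, map_inv₀]]
      rw [show ((p:ℂ)⁻¹ * (p:ℂ)⁻¹ * S) * ((p:ℂ)⁻¹ * (p:ℂ)⁻¹ * (starRingEnd ℂ) S)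
          = ((p:ℂ)⁻¹)^4 * (S * (starRingEnd ℂ) S) from by ring, hSS]
      field_simp
    have hre : ((Complex.normSq (inner ℂ (cpVec p θ μ ν x y) (cpVec p θ μ' ν' x' y') : ℂ) : ℝ) : ℂ)
        = ((1 / ((p : ℝ) ^ 2) : ℝ) : ℂ) := by
      rw [← Complex.mul_conj, habs2]
      push_cast
      field_simp
    rw [Complex.sq_norm]
    exact_mod_cast Complex.ofReal_injective hre
  · intro μ ν x y st
    rw [EuclideanSpace.inner_single_left, cpVec_apply]
    simp only [map_one, one_mul]
    rw [norm_mul, norm_inv, Complex.norm_natCast, abs_eps, mul_one]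
    simp [inv_pow, one_div]
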